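/- Let a < b < c. Suppose the impulse gradient is mapped by the short flow map as ∇m_c = T_{[b,c]}ᵀ ∇m_b T_{[b,c]} (omitting the Hessian term). Then substituting this into the particle-to-grid transfer m_i = ∑_p w_ip (m_c^p + ∇m_c^p (x_i − x_p)) / ∑_p w_ip, and using the first-order approximation T_{[b,c]}(x_i − x_p) ≈ ψ(x_i) − ψ(x_p) together with m_b(ψ(x_i)) − m_b(ψ(x_p)) ≈ ∇m_b (ψ(x_i) − ψ(x_p)) and m_c^p = T_{[b,c]}ᵀ m_b(ψ(x_p)), the transferred grid impulse reduces to m_i = (∑_p w_ip T_{[b,c]}^{pᵀ} / ∑_p w_ip) m_b(ψ(x_i)); i.e., the gradient-augmented transfer without Hessian is equivalent to PIC-style interpolation of the backward Jacobian Tᵀ applied to the backtracked impulse. -/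

import Mathlib

/-- The gradient-augmented particle-to-grid transfer without the Hessian
    term reduces, to first order, to PIC-style interpolation of the backward Jacobian
    transpose applied to the backtracked impulse. -/
theorem p2g_no_hessian_is_pic {n : ℕ} {ι : Type*} [Fintype ι]
    (w : ι → ℝ) (hw : ∀ p, 0 ≤ w p) (hwsum : 0 < ∑ p, w p)
    (xp : ι → (Fin n → ℝ)) (xi : Fin n → ℝ)
    (T : ι → Matrix (Fin n) (Fin n) ℝ)
    (ψ : (Fin n → ℝ) → (Fin n → ℝ))
    (mb : (Fin n → ℝ) → (Fin n → ℝ))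
    (Gb : Matrix (Fin n) (Fin n) ℝ)
    (mc : ι → (Fin n → ℝ)) (gmc : ι → Matrix (Fin n) (Fin n) ℝ)
    (hmc : ∀ p, mc p = (T p).transpose.mulVec (mb (ψ (xp p))))
    (hgmc : ∀ p, gmc p = (T p).transpose * Gb * T p)
    (happrox₁ : ∀ p, (T p).mulVec (xi - xp p) = ψ xi - ψ (xp p))
    (happrox₂ : ∀ p, mb (ψ xi) - mb (ψ (xp p)) = Gb.mulVec (ψ xi - ψ (xp p))) :
    (∑ p, w p)⁻¹ • (∑ p, w p • (mc p + (gmc p).mulVec (xi - xp p)))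
      = ((∑ p, w p)⁻¹ • ∑ p, w p • (T p).transpose).mulVec (mb (ψ xi)) := by
  have key : ∀ p, mc p + (gmc p).mulVec (xi - xp p) = (T p).transpose.mulVec (mb (ψ xi)) := by
    intro p
    rw [hmc, hgmc, Matrix.mul_assoc, ← Matrix.mulVec_mulVec, ← Matrix.mulVec_mulVec,
      happrox₁, ← happrox₂, ← Matrix.mulVec_add]
    congr 1
    ext j
    rw [Pi.add_apply, Pi.sub_apply]; ring
  simp only [key, ← Matrix.smul_mulVec]
  ext i
  simp only [Pi.smul_apply, Finset.sum_apply, Matrix.mulVec, dotProduct,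
    Matrix.sum_apply, Matrix.smul_apply, Matrix.transpose_apply, smul_eq_mul,
    Finset.mul_sum, Finset.sum_mul]
  rw [Finset.sum_comm]
  simp only [mul_assoc]
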